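/- In the good/bad/ugly setting, for every i with 0 ≤ i ≤ m one has ‖good^i‖ ≥ 1 − ‖ugly^i‖. In particular, if ε ≥ 0 and ‖Π_bad A^j‖ ≤ ε for all 1 ≤ j ≤ i, then ‖good^i‖ ≥ 1 − i·ε. -/

import Mathlib

theorem welded_tree_good_lower_bound
    {{H : Type*}} [NormedAddCommGroup H] [InnerProductSpace ℂ H]
    (m : ℕ) (C : ℕ → (H ≃ₗᵢ[ℂ] H))
    (P : H →L[ℂ] H)
    (hPidem : ∀ x : H, P (P x) = P x)
    (hPsa : ∀ x y : H, (inner ℂ (P x) y : ℂ) = inner ℂ x (P y))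
    (ψ0 : H) (hψ0 : ‖ψ0‖ = 1) (hψ0bad : P ψ0 = 0)
    (A good bad ugly : ℕ → H)
    (hA0 : A 0 = ψ0)
    (hA : ∀ i : ℕ, 1 ≤ i → i ≤ m → A i = C i (A (i - 1)))
    (hgood0 : good 0 = ψ0) (hbad0 : bad 0 = 0) (hugly0 : ugly 0 = 0)
    (hgood : ∀ i : ℕ, 1 ≤ i → i ≤ m →
      good i = C i (good (i - 1)) - P (C i (good (i - 1))))
    (hbad : ∀ i : ℕ, 1 ≤ i → i ≤ m → bad i = P (C i (good (i - 1))))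
    (hugly : ∀ i : ℕ, 1 ≤ i → i ≤ m → ugly i = bad i + C i (ugly (i - 1))) :
    ∀ i : ℕ, i ≤ m →
      1 - ‖ugly i‖ ≤ ‖good i‖ ∧
      ∀ ε : ℝ, 0 ≤ ε → (∀ j : ℕ, 1 ≤ j → j ≤ i → ‖P (A j)‖ ≤ ε) →
        1 - (i : ℝ) * ε ≤ ‖good i‖ := by
  -- orthogonality: inner (P x) (x - P x) = 0
  have horth : ∀ x : H, (inner ℂ (P x) (x - P x) : ℂ) = 0 := by
    intro x
    have h2 : (inner ℂ (P x) (P x) : ℂ) = inner ℂ x (P x) := by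
      rw [hPsa x (P x), hPidem]
    rw [inner_sub_right, hPsa x x, h2]
    ring
  -- Pythagoras: ‖x - P x‖ ≤ ‖x‖
  have hcontr : ∀ x : H, ‖x - P x‖ ≤ ‖x‖ := by
    intro x
    have h := norm_add_sq_eq_norm_sq_add_norm_sq_of_inner_eq_zero (P x) (x - P x) (horth x)
    have hx : P x + (x - P x) = x := by abel
    rw [hx] at h
    nlinarith [norm_nonneg (P x), norm_nonneg (x - P x), norm_nonneg x]
  -- main invariant by induction
  have key : ∀ i : ℕ, i ≤ m → A i = good i + ugly i ∧ ‖A i‖ = 1 ∧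
      ∀ ε : ℝ, 0 ≤ ε → (∀ j : ℕ, 1 ≤ j → j ≤ i → ‖P (A j)‖ ≤ ε) →
        ‖ugly i‖ ≤ (i : ℝ) * ε := by
    intro i
    induction i with
    | zero =>
      intro _
      refine ⟨by rw [hA0, hgood0, hugly0, add_zero], by rw [hA0, hψ0], ?_⟩
      intro ε hε _
      simp [hugly0]
    | succ i ih =>
      intro hi1
      have hi : i ≤ m := Nat.le_of_succ_le hi1
      obtain ⟨hAdecomp, hAnorm, hugly_bound⟩ := ih hi
      have h1 : 1 ≤ i + 1 := Nat.le_add_left 1 i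
      have hsub : i + 1 - 1 = i := rfl
      have hAi1 : A (i + 1) = C (i + 1) (A i) := by
        have := hA (i + 1) h1 hi1; rwa [hsub] at this
      have hAnorm1 : ‖A (i + 1)‖ = 1 := by
        rw [hAi1, (C (i + 1)).norm_map, hAnorm]
      have hgood1 : good (i + 1) = C (i + 1) (good i) - P (C (i + 1) (good i)) := by
        have := hgood (i + 1) h1 hi1; rwa [hsub] at this
      have hbad1 : bad (i + 1) = P (C (i + 1) (good i)) := by
        have := hbad (i + 1) h1 hi1; rwa [hsub] at this
      have hugly1 : ugly (i + 1) = bad (i + 1) + C (i + 1) (ugly i) := by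
        have := hugly (i + 1) h1 hi1; rwa [hsub] at this
      have hdecomp1 : A (i + 1) = good (i + 1) + ugly (i + 1) := by
        rw [hAi1, hgood1, hugly1, hbad1, hAdecomp, map_add]
        abel
      refine ⟨hdecomp1, hAnorm1, ?_⟩
      intro ε hε hPA
      -- ugly (i+1) = P (A (i+1)) + (C (i+1) (ugly i) - P (C (i+1) (ugly i)))
      have hrewrite : ugly (i + 1) =
          P (A (i + 1)) + (C (i + 1) (ugly i) - P (C (i + 1) (ugly i))) := by
        have hgi : good i = A i - ugly i := by rw [hAdecomp]; abel
        rw [hugly1, hbad1, hgi, map_sub, map_sub, hAi1]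
        abel
      have hPAbound : ‖P (A (i + 1))‖ ≤ ε := hPA (i + 1) h1 (le_refl _)
      have hprev : ‖ugly i‖ ≤ (i : ℝ) * ε := by
        refine hugly_bound ε hε ?_
        intro j hj1 hj2
        exact hPA j hj1 (Nat.le_succ_of_le hj2)
      calc ‖ugly (i + 1)‖
          ≤ ‖P (A (i + 1))‖ + ‖C (i + 1) (ugly i) - P (C (i + 1) (ugly i))‖ := by
            rw [hrewrite]; exact norm_add_le _ _
        _ ≤ ε + ‖C (i + 1) (ugly i)‖ := add_le_add hPAbound (hcontr _)
        _ = ε + ‖ugly i‖ := by rw [(C (i + 1)).norm_map]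
        _ ≤ ε + (i : ℝ) * ε := by linarith
        _ = ((i + 1 : ℕ) : ℝ) * ε := by push_cast; ring
  intro i hi
  obtain ⟨hAdecomp, hAnorm, hugly_bound⟩ := key i hi
  have hgi : good i = A i - ugly i := by rw [hAdecomp]; abel
  have hlow : 1 - ‖ugly i‖ ≤ ‖good i‖ := by
    have := norm_sub_norm_le (A i) (ugly i)
    rw [← hgi, hAnorm] at this
    linarith
  refine ⟨hlow, ?_⟩
  intro ε hε hPA
  have := hugly_bound ε hε hPA
  linarith
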